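/- arXiv:1005.5087 — 5 statements merged into one kernel-verified Lean document; each statement's English description precedes it below -/
import Mathlib

section
/- Let N ≥ 1 and q_1, ..., q_{N-1} be complex numbers. Define the N×N matrix Q by Q_{ij} = ∏_{k=min(i,j)}^{max(i,j)-1} q_k (with Q_{ii} = 1, the empty product). Then det Q = (1 - q_1²)(1 - q_2²)···(1 - q_{N-1}²). -/
open Finset Matrix

lemma aux (q : ℕ → ℂ) : ∀ n : ℕ,
    (Matrix.of fun i j : Fin (n+1) =>
        ∏ k ∈ Finset.Ico (min i.val j.val) (max i.val j.val), q k).det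
      = ∏ k ∈ Finset.range n, (1 - q k ^ 2) := by
  intro n
  induction n with
  | zero => simp [Matrix.det_fin_one]
  | succ n ih =>
    set M : Matrix (Fin (n+2)) (Fin (n+2)) ℂ := Matrix.of fun i j : Fin (n+2) =>
        ∏ k ∈ Finset.Ico (min i.val j.val) (max i.val j.val), q k with hM
    have hi : (Fin.last (n+1)) ≠ ((Fin.last n).castSucc) := by
      simp [Fin.ext_iff]
    have key : M.det = (M.updateRow (Fin.last (n+1))
        (M (Fin.last (n+1)) + (-(q n)) • M ((Fin.last n).castSucc))).det :=
      (Matrix.det_updateRow_add_smul_self M hi _).symm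
    rw [key, Matrix.det_succ_row _ (Fin.last (n+1))]
    have hrow : ∀ j : Fin (n+2),
        (M.updateRow (Fin.last (n+1))
          (M (Fin.last (n+1)) + (-(q n)) • M ((Fin.last n).castSucc)))
          (Fin.last (n+1)) j
        = if j = Fin.last (n+1) then 1 - q n ^ 2 else 0 := by
      intro j
      rw [Matrix.updateRow_self]
      by_cases hj : j = Fin.last (n+1)
      · subst hj
        simp only [hM, Pi.add_apply, Pi.smul_apply, Matrix.of_apply, if_pos rfl]
        have h1 : min (Fin.last (n+1)).val (Fin.last (n+1)).val = n+1 := by simp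
        have : ((Fin.last n).castSucc).val = n := by simp
        simp only [Fin.val_last, min_self, max_self, Finset.Ico_self, Finset.prod_empty,
          Fin.coe_castSucc, Fin.val_last]
        rw [min_eq_left (Nat.le_succ n), max_eq_right (Nat.le_succ n)]
        have : Finset.Ico n (n+1) = {n} := by
          rw [Finset.Ico_add_one_right_eq_Icc, Finset.Icc_self]
        rw [this]
        simp [sq]
        ring
      · have hne : j.val ≠ n + 1 := fun h => hj (Fin.ext (by simpa using h))
        have hjlt : j.val < n + 1 := by
          have := j.isLt
          omega
        simp only [hM, Pi.add_apply, Pi.smul_apply, Matrix.of_apply, if_neg hj,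
          Fin.val_last, Fin.coe_castSucc]
        rw [min_eq_right (le_of_lt hjlt), max_eq_left (le_of_lt hjlt)]
        rcases Nat.lt_or_ge j.val n with h | h
        · rw [min_eq_right (le_of_lt h), max_eq_left (le_of_lt h),
            Finset.prod_Ico_succ_top (le_of_lt h)]
          simp
          ring
        · have hjn : j.val = n := by omega
          rw [hjn]
          simp
    rw [Finset.sum_eq_single (Fin.last (n+1))]
    · rw [hrow, if_pos rfl]
      have hsub : ((M.updateRow (Fin.last (n+1))
            (M (Fin.last (n+1)) + (-(q n)) • M ((Fin.last n).castSucc))).submatrix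
            (Fin.last (n+1)).succAbove (Fin.last (n+1)).succAbove)
          = Matrix.of fun i j : Fin (n+1) =>
              ∏ k ∈ Finset.Ico (min i.val j.val) (max i.val j.val), q k := by
        ext i j
        simp only [Matrix.submatrix_apply, Fin.succAbove_last, Matrix.of_apply]
        rw [Matrix.updateRow_ne (Fin.castSucc_lt_last i).ne]
        simp [hM]
      rw [hsub, ih]
      rw [Finset.prod_range_succ]
      simp [pow_succ]
      ring
    · intro j _ hj
      rw [hrow, if_neg hj]
      ring
    · intro h
      exact absurd (Finset.mem_univ _) h

/-- Determinant of the matrix `Q` with entries `Q i j = ∏_{k=min i j}^{max i j - 1} q k`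
equals `∏_{k=0}^{N-2} (1 - q k ^ 2)`. -/
theorem stmt_0 (N : ℕ) (hN : 1 ≤ N) (q : ℕ → ℂ) :
    (Matrix.of fun i j : Fin N =>
        ∏ k ∈ Finset.Ico (min i.val j.val) (max i.val j.val), q k).det
      = ∏ k ∈ Finset.range (N - 1), (1 - q k ^ 2) := by
  obtain ⟨m, rfl⟩ : ∃ m, N = m + 1 := ⟨N - 1, (Nat.succ_pred_eq_of_pos hN).symm⟩
  simpa using aux q m
end

section
/- Let N ≥ 1 and q_1, ..., q_{N-1} be complex numbers with matrix Q as above. Q is invertible if and only if q_j ≠ 1 and q_j ≠ -1 for all j ∈ {1,...,N-1}. -/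
open Finset Matrix

namespace Stmt1Aux

noncomputable def P (q : ℕ → ℂ) (a b : ℕ) : ℂ := ∏ k ∈ Finset.Ico a b, q k

noncomputable def d (q : ℕ → ℂ) (m : ℕ) : ℂ := if m = 0 then 1 else 1 - (q (m-1))^2

lemma P_mul (q : ℕ → ℂ) {a b c : ℕ} (hab : a ≤ b) (hbc : b ≤ c) :
    P q a b * P q b c = P q a c := Finset.prod_Ico_consecutive _ hab hbc

lemma P_self (q : ℕ → ℂ) (a : ℕ) : P q a a = 1 := by simp [P]

lemma P_succ (q : ℕ → ℂ) {a b : ℕ} (hab : a ≤ b) :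
    P q a (b+1) = P q a b * q b := Finset.prod_Ico_succ_top hab _

lemma key (q : ℕ → ℂ) (i : ℕ) :
    ∑ m ∈ Finset.range (i+1), (P q m i)^2 * d q m = 1 := by
  induction i with
  | zero => simp [P, d]
  | succ i ih =>
    rw [Finset.sum_range_succ]
    have h1 : ∀ m ∈ Finset.range (i+1), (P q m (i+1))^2 * d q m
        = (q i)^2 * ((P q m i)^2 * d q m) := by
      intro m hm
      have hm' : m ≤ i := Nat.lt_succ_iff.mp (Finset.mem_range.mp hm)
      rw [P_succ q hm']; ring
    rw [Finset.sum_congr rfl h1, ← Finset.mul_sum, ih, P_self]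
    have hd : d q (i+1) = 1 - q i ^ 2 := by simp [d]
    rw [hd]; ring

lemma sum_eq (q : ℕ → ℂ) (N : ℕ) (i j : Fin N) (hij : i.val ≤ j.val) :
    ∑ m : Fin N, (if m.val ≤ i.val then P q m.val i.val else 0) * d q m.val *
      (if m.val ≤ j.val then P q m.val j.val else 0) = P q i.val j.val := by
  rw [Fin.sum_univ_eq_sum_range (fun m => (if m ≤ i.val then P q m i.val else 0) * d q m *
      (if m ≤ j.val then P q m j.val else 0))]
  rw [← Finset.sum_subset (Finset.range_subset_range.mpr (show i.val + 1 ≤ N from i.isLt))]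
  · have h1 : ∀ m ∈ Finset.range (i.val+1),
        (if m ≤ i.val then P q m i.val else 0) * d q m * (if m ≤ j.val then P q m j.val else 0)
        = ((P q m i.val)^2 * d q m) * P q i.val j.val := by
      intro m hm
      have hm' : m ≤ i.val := Nat.lt_succ_iff.mp (Finset.mem_range.mp hm)
      rw [if_pos hm', if_pos (hm'.trans hij), ← P_mul q hm' hij]
      ring
    rw [Finset.sum_congr rfl h1, ← Finset.sum_mul, key, one_mul]
  · intro m _ hm
    rw [if_neg (by simpa using fun h => hm (Finset.mem_range.mpr (Nat.lt_succ_of_le h)))]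
    ring

end Stmt1Aux

open Stmt1Aux in
/-- The matrix `Q` is invertible iff all `q k ≠ ±1`. -/
theorem stmt_1 (N : ℕ) (hN : 1 ≤ N) (q : ℕ → ℂ) :
    IsUnit (Matrix.of fun i j : Fin N =>
        ∏ k ∈ Finset.Ico (min i.val j.val) (max i.val j.val), q k)
      ↔ ∀ k < N - 1, q k ≠ 1 ∧ q k ≠ -1 := by
  set L : Matrix (Fin N) (Fin N) ℂ :=
    Matrix.of fun i m : Fin N => if m.val ≤ i.val then P q m.val i.val else 0 with hL
  set D : Matrix (Fin N) (Fin N) ℂ := Matrix.diagonal fun m : Fin N => d q m.val with hD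
  have hfact : (Matrix.of fun i j : Fin N =>
      ∏ k ∈ Finset.Ico (min i.val j.val) (max i.val j.val), q k) = L * D * Lᵀ := by
    ext i j
    have hentry : ∀ i j : Fin N, (L * D * Lᵀ) i j
        = ∑ m : Fin N, (if m.val ≤ i.val then P q m.val i.val else 0) * d q m.val *
          (if m.val ≤ j.val then P q m.val j.val else 0) := by
      intro i j
      rw [Matrix.mul_assoc, Matrix.mul_apply]
      refine Finset.sum_congr rfl fun m _ => ?_
      rw [hD, Matrix.diagonal_mul, Matrix.transpose_apply, hL]
      simp only [Matrix.of_apply]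
      ring
    rcases le_total i.val j.val with h | h
    · rw [hentry, sum_eq q N i j h]
      simp [P, min_eq_left h, max_eq_right h]
    · rw [hentry]
      have hcomm : (∑ m : Fin N, (if m.val ≤ i.val then P q m.val i.val else 0) * d q m.val *
          (if m.val ≤ j.val then P q m.val j.val else 0))
          = ∑ m : Fin N, (if m.val ≤ j.val then P q m.val j.val else 0) * d q m.val *
            (if m.val ≤ i.val then P q m.val i.val else 0) :=
        Finset.sum_congr rfl fun m _ => by ring
      rw [hcomm, sum_eq q N j i h]
      simp [P, min_eq_right h, max_eq_left h]
  have hdetL : L.det = 1 := by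
    rw [Matrix.det_of_lowerTriangular L (fun i j hij => by
      rw [hL]; simp only [Matrix.of_apply]
      rw [if_neg (by exact Nat.not_le.mpr hij)])]
    simp [hL, P_self]
  have hdet : (Matrix.of fun i j : Fin N =>
      ∏ k ∈ Finset.Ico (min i.val j.val) (max i.val j.val), q k).det
      = ∏ k ∈ Finset.range (N-1), (1 - (q k)^2) := by
    rw [hfact, Matrix.det_mul, Matrix.det_mul, Matrix.det_transpose, hdetL, hD,
      Matrix.det_diagonal, one_mul, mul_one]
    rw [Fin.prod_univ_eq_prod_range (fun m => d q m)]
    obtain ⟨n, rfl⟩ : ∃ n, N = n + 1 := ⟨N - 1, (Nat.succ_pred_eq_of_pos hN).symm⟩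
    rw [Finset.prod_range_succ']
    simp [d]
  rw [Matrix.isUnit_iff_isUnit_det, isUnit_iff_ne_zero, hdet, Finset.prod_ne_zero_iff]
  constructor
  · intro h k hk
    have := h k (Finset.mem_range.mpr hk)
    constructor
    · intro h1; apply this; rw [h1]; ring
    · intro h1; apply this; rw [h1]; ring
  · intro h k hk
    obtain ⟨h1, h2⟩ := h k (Finset.mem_range.mp hk)
    intro hc
    have : (1 - q k) * (1 + q k) = 0 := by rw [← hc]; ring
    rcases mul_eq_zero.mp this with h3 | h3
    · exact h1 (by linear_combination -h3)
    · exact h2 (by linear_combination h3)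
end

section
/- Let R be the N×N matrix with entries R_{ij} = |s_i - s_j| where s_1 < s_2 < ... < s_N are real numbers (so R_{ij} = m_{min(i,j)} + ... + m_{max(i,j)-1} with m_k = s_{k+1} - s_k > 0). If w ∈ ℝ^N satisfies w_1 + ... + w_N = 0 and all entries of Rw are equal, then w = 0. -/
/-- If `s` is strictly increasing and `R i j = |s i - s j|`, then the only zero-sum vector
`w` for which `R w` has all entries equal is `w = 0`. -/
theorem stmt_4 (N : ℕ) (s : Fin N → ℝ) (hs : StrictMono s) (w : Fin N → ℝ)
    (hsum : ∑ i, w i = 0) (c : ℝ)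
    (hconst : ∀ i, (Matrix.of fun i j : Fin N => |s i - s j|).mulVec w i = c) :
    w = 0 := by
  have hc : ∀ i : Fin N, ∑ j, |s i - s j| * w j = c := by
    intro i
    simpa [Matrix.mulVec, dotProduct] using hconst i
  set S : Fin N → ℝ := fun k => ∑ j ∈ Finset.univ.filter (fun j => j ≤ k), w j with hSdef
  have key : ∀ k : Fin N, S k = 0 := by
    intro k
    by_cases hk : (k : ℕ) + 1 < N
    · set k' : Fin N := ⟨(k : ℕ) + 1, hk⟩ with hk'
      have hd : (0:ℝ) < s k' - s k := sub_pos.2 (hs (by rw [Fin.lt_def]; show (k:ℕ) < (k:ℕ)+1; omega))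
      have heq : ∑ j, (|s k' - s j| - |s k - s j|) * w j = 0 := by
        simp [sub_mul, Finset.sum_sub_distrib, hc k', hc k]
      have heq2 : ∑ j, (if j ≤ k then (s k' - s k) * w j else -((s k' - s k) * w j)) = 0 := by
        rw [← heq]
        refine Finset.sum_congr rfl fun j _ => ?_
        by_cases hj : j ≤ k
        · have h1 : s j ≤ s k := hs.monotone hj
          have h2 : s k < s k' := by linarith
          rw [if_pos hj, abs_of_nonneg (by linarith), abs_of_nonneg (by linarith)]
          ring
        · have hjk : k' ≤ j := by
            have hlt := Fin.lt_def.mp (lt_of_not_ge hj)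
            rw [Fin.le_def]
            simp only [hk']
            omega
          have h1 : s k' ≤ s j := hs.monotone hjk
          rw [if_neg hj, abs_of_nonpos (by linarith), abs_of_nonpos (by linarith)]
          ring
      rw [Finset.sum_ite] at heq2
      have hsplit : S k + ∑ j ∈ Finset.univ.filter (fun j => ¬ j ≤ k), w j = 0 := by
        rw [hSdef]
        rw [Finset.sum_filter_add_sum_filter_not]
        exact hsum
      rw [← Finset.mul_sum, Finset.sum_neg_distrib, ← Finset.mul_sum] at heq2
      have hB : ∑ j ∈ Finset.univ.filter (fun j => ¬ j ≤ k), w j = -S k := by linarith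
      rw [hB] at heq2
      have : (s k' - s k) * S k = 0 := by
        simp only [hSdef] at heq2 ⊢
        nlinarith [heq2]
      have := mul_eq_zero.mp this
      rcases this with h | h
      · linarith
      · exact h
    · have hall : ∀ j : Fin N, j ≤ k := by
        intro j
        rw [Fin.le_def]
        have := j.isLt
        omega
      rw [hSdef]
      simp only
      rw [Finset.filter_true_of_mem fun j _ => hall j]
      exact hsum
  have hlt : ∀ i : Fin N, ∑ j ∈ Finset.univ.filter (fun j => j < i), w j = 0 := by
    intro i
    rcases Nat.eq_zero_or_pos (i : ℕ) with h0 | hpos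
    · have : Finset.univ.filter (fun j : Fin N => j < i) = ∅ := by
        apply Finset.filter_false_of_mem
        intro j _
        rw [Fin.lt_def]
        omega
      simp [this]
    · set i' : Fin N := ⟨(i : ℕ) - 1, by omega⟩ with hi'
      have : Finset.univ.filter (fun j : Fin N => j < i)
          = Finset.univ.filter (fun j : Fin N => j ≤ i') := by
        apply Finset.filter_congr
        intro j _
        simp only [Fin.lt_def, Fin.le_def, hi', Fin.val_mk]
        omega
      rw [this]
      exact key i'
  funext i
  have hins : Finset.univ.filter (fun j : Fin N => j ≤ i)
      = insert i (Finset.univ.filter (fun j : Fin N => j < i)) := by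
    ext j
    simp [le_iff_lt_or_eq, or_comm]
  have : S i = w i + ∑ j ∈ Finset.univ.filter (fun j => j < i), w j := by
    rw [hSdef]
    simp only
    rw [hins, Finset.sum_insert (by simp)]
  have hk := key i
  have hl := hlt i
  simp only [Pi.zero_apply]
  linarith [this ▸ hk]
end

section
/- Let A₀, A₁ ∈ ℂ^{n×n}, suppose A₀ has kernel K of dimension k with ℂ^n = K ⊕ Range(A₀) (i.e., the zero eigenvalue of A₀ is semisimple), and suppose the bilinear form (u, v) ↦ ⟨v, A₁ u⟩ restricted to Null(A₀) × Null(A₀*) is nondegenerate. Let A(θ) = A₀ + θA₁ + O(θ²) and h(θ) = h₀ + θh₁ + O(θ²) be analytic with h₀ ⊥ Null(A₀*). If A(θ) is invertible for θ ≠ 0 near 0, then the unique solution c(θ) of A(θ)c(θ) = h(θ) remains bounded as θ → 0. -/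
open Matrix

set_option maxHeartbeats 1000000

lemma aux_antilip {E F : Type*} [NormedAddCommGroup E] [NormedSpace ℂ E]
    [NormedAddCommGroup F] [NormedSpace ℂ F] [FiniteDimensional ℂ E]
    (f : E →ₗ[ℂ] F) (hf : Function.Injective f) :
    ∃ m > 0, ∀ x, ‖x‖ ≤ m * ‖f x‖ := by
  let e := LinearEquiv.ofInjective f hf
  let g := e.symm.toLinearMap.toContinuousLinearMap
  refine ⟨‖g‖ + 1, by positivity, fun x => ?_⟩
  have h2 : ‖x‖ ≤ ‖g‖ * ‖e x‖ := by
    conv_lhs => rw [(e.symm_apply_apply x).symm]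
    exact g.le_opNorm (e x)
  have h3 : ‖e x‖ = ‖f x‖ := by
    have : ((e x : LinearMap.range f) : F) = f x := LinearEquiv.ofInjective_apply f x
    rw [← this]; rfl
  rw [h3] at h2
  nlinarith [norm_nonneg (f x), norm_nonneg g]

lemma aux_opbound {n : ℕ} {F : Type*} [NormedAddCommGroup F] [NormedSpace ℂ F]
    (f : (Fin n → ℂ) →ₗ[ℂ] F) : ∃ C ≥ 0, ∀ x, ‖f x‖ ≤ C * ‖x‖ :=
  ⟨‖f.toContinuousLinearMap‖, norm_nonneg _, fun x => f.toContinuousLinearMap.le_opNorm x⟩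

lemma aux_mulVec_bound {n : ℕ} (M : Matrix (Fin n) (Fin n) ℂ) (K : ℝ) (hK : 0 ≤ K)
    (hM : ∀ i j, ‖M i j‖ ≤ K) (x : Fin n → ℂ) :
    ‖M *ᵥ x‖ ≤ (n * K) * ‖x‖ := by
  rw [pi_norm_le_iff_of_nonneg (by positivity)]
  intro i
  calc ‖(M *ᵥ x) i‖ = ‖∑ j, M i j * x j‖ := by simp [Matrix.mulVec, dotProduct]
    _ ≤ ∑ j, ‖M i j * x j‖ := norm_sum_le _ _
    _ ≤ ∑ _j : Fin n, K * ‖x‖ := by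
        refine Finset.sum_le_sum fun j _ => ?_
        rw [norm_mul]
        exact mul_le_mul (hM i j) (norm_le_pi_norm x j) (norm_nonneg _) hK
    _ = (n * K) * ‖x‖ := by simp [mul_assoc]

lemma aux_vec_bound {n : ℕ} (v : Fin n → ℂ) (K : ℝ) (hK : 0 ≤ K)
    (hv : ∀ i, ‖v i‖ ≤ K) : ‖v‖ ≤ K := by
  rw [pi_norm_le_iff_of_nonneg hK]; exact hv

lemma aux_sum_dotProduct {m k : ℕ} (s : Finset (Fin k)) (f : Fin k → (Fin m → ℂ))
    (v : Fin m → ℂ) :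
    dotProduct (∑ i ∈ s, f i) v = ∑ i ∈ s, dotProduct (f i) v := by
  simp [dotProduct, Finset.sum_mul]
  rw [Finset.sum_comm]

noncomputable def auxG {n k : ℕ} (vs : Fin k → (Fin n → ℂ)) :
    (Fin n → ℂ) →ₗ[ℂ] (Fin k → ℂ) :=
  LinearMap.pi (fun i =>
    { toFun := fun x => dotProduct (star (vs i)) x
      map_add' := fun x y => dotProduct_add _ _ _
      map_smul' := fun a x => by simp })

lemma auxG_apply {n k : ℕ} (vs : Fin k → (Fin n → ℂ)) (x : Fin n → ℂ) (i : Fin k) :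
    auxG vs x i = dotProduct (star (vs i)) x := rfl

/-- Lyapunov–Schmidt lemma: if `A(θ) = A₀ + θ A₁ + O(θ²)` and `h(θ) = h₀ + θ h₁ + O(θ²)`,
the zero eigenvalue of `A₀` is semisimple (`ℂⁿ = Null(A₀) ⊕ Range(A₀)`), `h₀ ⊥ Null(A₀*)`,
the restriction of `A₁` to `Null(A₀)` paired against `Null(A₀*)` is nondegenerate, and
`A(θ)` is invertible for small `θ ≠ 0`, then the unique solution `c(θ)` of
`A(θ) c = h(θ)` stays bounded as `θ → 0`. -/
theorem stmt_9 (n : ℕ) (A₀ A₁ : Matrix (Fin n) (Fin n) ℂ)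
    (hcompl : IsCompl (LinearMap.ker A₀.mulVecLin) (LinearMap.range A₀.mulVecLin))
    (hnondeg : ∀ u ∈ LinearMap.ker A₀.mulVecLin,
        (∀ v ∈ LinearMap.ker A₀.conjTranspose.mulVecLin,
            dotProduct (star v) (A₁.mulVec u) = 0) → u = 0)
    (θ₀ : ℝ) (hθ₀ : 0 < θ₀)
    (A : ℝ → Matrix (Fin n) (Fin n) ℂ) (h : ℝ → Fin n → ℂ) (h₀ h₁ : Fin n → ℂ)
    (CA : ℝ) (hA : ∀ θ : ℝ, |θ| < θ₀ → ∀ i j,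
        ‖(A θ - A₀ - (θ : ℂ) • A₁) i j‖ ≤ CA * θ ^ 2)
    (Ch : ℝ) (hh : ∀ θ : ℝ, |θ| < θ₀ → ∀ i,
        ‖h θ i - h₀ i - (θ : ℂ) * h₁ i‖ ≤ Ch * θ ^ 2)
    (horth : ∀ v ∈ LinearMap.ker A₀.conjTranspose.mulVecLin,
        dotProduct (star v) h₀ = 0)
    (hinv : ∀ θ : ℝ, θ ≠ 0 → |θ| < θ₀ → IsUnit (A θ)) :
    ∃ C > 0, ∃ θ₁ > 0, ∀ θ : ℝ, θ ≠ 0 → |θ| < θ₁ →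
      ∀ c : Fin n → ℂ, (A θ).mulVec c = h θ → ∀ i, ‖c i‖ ≤ C := by
  classical
  set K := LinearMap.ker A₀.mulVecLin with hK
  set R := LinearMap.range A₀.mulVecLin with hR
  set Ks := LinearMap.ker A₀.conjTranspose.mulVecLin with hKs
  set b := Module.finBasis ℂ Ks with hb
  set G := auxG (fun i => ((b i : Ks) : Fin n → ℂ)) with hGdef
  -- adjoint pairing kills the range of A₀
  have fact_adj : ∀ v ∈ Ks, ∀ x : Fin n → ℂ,
      dotProduct (star v) (A₀ *ᵥ x) = 0 := by
    intro v hv x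
    rw [hKs, LinearMap.mem_ker] at hv
    have hv' : A₀.conjTranspose *ᵥ v = 0 := by rwa [Matrix.mulVecLin_apply] at hv
    rw [Matrix.dotProduct_mulVec]
    have h2 : star v ᵥ* A₀ = star (A₀.conjTranspose *ᵥ v) := by
      rw [Matrix.star_mulVec, Matrix.conjTranspose_conjTranspose]
    rw [h2, hv', star_zero, zero_dotProduct]
  have hGA₀ : ∀ x, G (A₀ *ᵥ x) = 0 := by
    intro x; funext i
    simp only [hGdef, auxG_apply, Pi.zero_apply]
    exact fact_adj _ (b i).2 x
  have hGh₀ : G h₀ = 0 := by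
    funext i
    simp only [hGdef, auxG_apply, Pi.zero_apply]
    exact horth _ (b i).2
  -- G y = 0 means y is annihilated by all of Ks
  have hGspan : ∀ y : Fin n → ℂ, G y = 0 → ∀ v ∈ Ks,
      dotProduct (star v) y = 0 := by
    intro y hy v hv
    have hy' : ∀ i, dotProduct (star ((b i : Ks) : Fin n → ℂ)) y = 0 := by
      intro i
      have := congrFun hy i
      rw [hGdef, auxG_apply] at this
      exact this
    have hv2 : v = ∑ i, b.repr ⟨v, hv⟩ i • ((b i : Ks) : Fin n → ℂ) := by
      have h1 := congrArg (Subtype.val) (b.sum_repr ⟨v, hv⟩)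
      rw [Submodule.coe_sum] at h1
      simp only [SetLike.val_smul] at h1
      exact h1.symm
    rw [hv2, star_sum]
    have hstep : ∀ i : Fin (Module.finrank ℂ Ks),
        star (b.repr ⟨v, hv⟩ i • ((b i : Ks) : Fin n → ℂ))
          = star (b.repr ⟨v, hv⟩ i) • star ((b i : Ks) : Fin n → ℂ) :=
      fun i => star_smul _ _
    rw [Finset.sum_congr rfl (fun i _ => hstep i), aux_sum_dotProduct]
    simp [smul_dotProduct, hy']
  -- injectivity of G ∘ A₁ on K
  have hinjK : Function.Injective ((G ∘ₗ A₁.mulVecLin).domRestrict K) := by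
    rw [← LinearMap.ker_eq_bot, LinearMap.ker_eq_bot']
    intro u hu0
    have h1 : G (A₁ *ᵥ (u : Fin n → ℂ)) = 0 := by
      simpa [LinearMap.domRestrict_apply, Matrix.mulVecLin_apply] using hu0
    exact Subtype.ext (hnondeg _ u.2 (fun v hv => hGspan _ h1 v hv))
  -- injectivity of A₀ on R
  have hinjR : Function.Injective (A₀.mulVecLin.domRestrict R) := by
    rw [← LinearMap.ker_eq_bot, LinearMap.ker_eq_bot']
    intro w hw0
    have hmem : (w : Fin n → ℂ) ∈ K := by
      rw [hK, LinearMap.mem_ker]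
      simpa [LinearMap.domRestrict_apply] using hw0
    exact Subtype.ext (Submodule.disjoint_def.mp hcompl.disjoint _ hmem w.2)
  obtain ⟨m, hm, hmle⟩ := aux_antilip (A₀.mulVecLin.domRestrict R) hinjR
  obtain ⟨μ, hμ0, hμle⟩ := aux_antilip ((G ∘ₗ A₁.mulVecLin).domRestrict K) hinjK
  obtain ⟨a₁, ha₁, ha₁le⟩ := aux_opbound A₁.mulVecLin
  obtain ⟨g, hg, hgle⟩ := aux_opbound G
  set CA' := max CA 0 with hCA'
  set Ch' := max Ch 0 with hCh'
  have hCA'0 : 0 ≤ CA' := le_max_right _ _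
  have hCh'0 : 0 ≤ Ch' := le_max_right _ _
  set H := ‖h₀‖ + ‖h₁‖ + Ch' with hH
  have hH0 : 0 ≤ H := by
    rw [hH]; exact add_nonneg (add_nonneg (norm_nonneg _) (norm_nonneg _)) hCh'0
  have hn0 : (0:ℝ) ≤ (n:ℝ) := Nat.cast_nonneg n
  have hsum0 : (0:ℝ) ≤ a₁ + n * CA' := add_nonneg ha₁ (mul_nonneg hn0 hCA'0)
  set D₁ := μ * (g * ‖h₁‖ + g * Ch' + g * a₁ * (m * H)) + m * H with hD₁
  set D₂ := μ * (g * (n * CA') + g * a₁ * (m * (a₁ + n * CA'))) + m * (a₁ + n * CA')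
    with hD₂
  have hD₁0 : 0 ≤ D₁ := by
    rw [hD₁]
    exact add_nonneg (mul_nonneg hμ0.le (add_nonneg (add_nonneg
      (mul_nonneg hg (norm_nonneg _)) (mul_nonneg hg hCh'0))
      (mul_nonneg (mul_nonneg hg ha₁) (mul_nonneg hm.le hH0)))) (mul_nonneg hm.le hH0)
  have hD₂0 : 0 ≤ D₂ := by
    rw [hD₂]
    exact add_nonneg (mul_nonneg hμ0.le (add_nonneg
      (mul_nonneg hg (mul_nonneg hn0 hCA'0))
      (mul_nonneg (mul_nonneg hg ha₁) (mul_nonneg hm.le hsum0)))) (mul_nonneg hm.le hsum0)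
  clear_value D₁ D₂
  refine ⟨2 * D₁ + 1, by linarith, min (min θ₀ 1) (1 / (2 * (D₂ + 1))),
    lt_min (lt_min hθ₀ one_pos) (by positivity), ?_⟩
  intro θ hθne hθlt c hc i
  have ht0 : 0 < |θ| := abs_pos.mpr hθne
  have htθ₀ : |θ| < θ₀ := lt_of_lt_of_le hθlt ((min_le_left _ _).trans (min_le_left _ _))
  have ht1 : |θ| ≤ 1 := le_of_lt (lt_of_lt_of_le hθlt ((min_le_left _ _).trans (min_le_right _ _)))
  have ht2 : |θ| ≤ 1 / (2 * (D₂ + 1)) := le_of_lt (lt_of_lt_of_le hθlt (min_le_right _ _))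
  have hθsq : θ ^ 2 ≤ |θ| := by nlinarith [sq_abs θ, abs_nonneg θ]
  set E := A θ - A₀ - (θ : ℂ) • A₁ with hEdef
  set e := fun j => h θ j - h₀ j - (θ : ℂ) * h₁ j with hedef
  have hEb : ∀ x, ‖E *ᵥ x‖ ≤ (n * (CA' * θ ^ 2)) * ‖x‖ := by
    intro x
    apply aux_mulVec_bound
    · exact mul_nonneg hCA'0 (sq_nonneg θ)
    · intro i' j
      rw [hEdef]
      exact le_trans (hA θ htθ₀ i' j)
        (mul_le_mul_of_nonneg_right (le_max_left _ _) (sq_nonneg θ))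
  have heb : ‖e‖ ≤ Ch' * θ ^ 2 := by
    apply aux_vec_bound
    · exact mul_nonneg hCh'0 (sq_nonneg θ)
    · intro j
      rw [hedef]
      exact le_trans (hh θ htθ₀ j)
        (mul_le_mul_of_nonneg_right (le_max_left _ _) (sq_nonneg θ))
  have hAsplit : ∀ x, A θ *ᵥ x = A₀ *ᵥ x + (θ:ℂ) • (A₁ *ᵥ x) + E *ᵥ x := by
    intro x
    rw [hEdef]
    simp only [Matrix.sub_mulVec, Matrix.smul_mulVec]
    abel
  have hhsplit : h θ = h₀ + (θ:ℂ) • h₁ + e := by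
    funext j
    simp only [hedef, Pi.add_apply, Pi.smul_apply, smul_eq_mul]
    ring
  have hhb : ‖h θ‖ ≤ H := by
    rw [hhsplit, hH]
    have h1 : ‖h₀ + (θ:ℂ) • h₁ + e‖ ≤ ‖h₀‖ + ‖(θ:ℂ) • h₁‖ + ‖e‖ := norm_add₃_le
    have h2 : ‖(θ:ℂ) • h₁‖ = |θ| * ‖h₁‖ := by rw [norm_smul, Complex.norm_real, Real.norm_eq_abs]
    have h3 : Ch' * θ ^ 2 ≤ Ch' := by nlinarith [sq_abs θ, abs_nonneg θ]
    have h4 : |θ| * ‖h₁‖ ≤ ‖h₁‖ := by nlinarith [norm_nonneg h₁]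
    linarith [heb]
  -- decompose c
  have hcmem : c ∈ K ⊔ R := by rw [hcompl.sup_eq_top]; exact Submodule.mem_top
  obtain ⟨u, hu, w, hw, huw⟩ := Submodule.mem_sup.mp hcmem
  have hA₀u : A₀ *ᵥ u = 0 := by
    rw [hK, LinearMap.mem_ker] at hu
    rwa [Matrix.mulVecLin_apply] at hu
  have hA₀c : A₀ *ᵥ c = h θ - (θ:ℂ) • (A₁ *ᵥ c) - E *ᵥ c := by
    rw [← hc, hAsplit]; abel
  have hA₀cb : ‖A₀ *ᵥ c‖ ≤ H + (a₁ + n * CA') * |θ| * ‖c‖ := by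
    rw [hA₀c]
    have h1 : ‖h θ - (θ:ℂ) • (A₁ *ᵥ c) - E *ᵥ c‖
        ≤ ‖h θ‖ + ‖(θ:ℂ) • (A₁ *ᵥ c)‖ + ‖E *ᵥ c‖ :=
      (norm_sub_le _ _).trans (add_le_add_left (norm_sub_le _ _) _)
    have h2 : ‖(θ:ℂ) • (A₁ *ᵥ c)‖ = |θ| * ‖A₁ *ᵥ c‖ := by
      rw [norm_smul, Complex.norm_real, Real.norm_eq_abs]
    have h3 : ‖A₁ *ᵥ c‖ ≤ a₁ * ‖c‖ := ha₁le c
    have h4 : ‖E *ᵥ c‖ ≤ (n * (CA' * θ ^ 2)) * ‖c‖ := hEb c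
    have h5 : (n * (CA' * θ ^ 2)) * ‖c‖ ≤ n * CA' * |θ| * ‖c‖ := by
      have : (n:ℝ) * (CA' * θ ^ 2) ≤ n * CA' * |θ| := by
        nlinarith [mul_le_mul_of_nonneg_left hθsq (mul_nonneg hn0 hCA'0)]
      exact mul_le_mul_of_nonneg_right this (norm_nonneg c)
    have h6 : |θ| * ‖A₁ *ᵥ c‖ ≤ |θ| * (a₁ * ‖c‖) :=
      mul_le_mul_of_nonneg_left h3 (abs_nonneg θ)
    linarith only [h1, h2, hhb, h4, h5, h6]
  have hwb : ‖w‖ ≤ m * H + m * (a₁ + n * CA') * |θ| * ‖c‖ := by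
    have h1 : ‖w‖ ≤ m * ‖A₀ *ᵥ w‖ := hmle ⟨w, hw⟩
    have h2 : A₀ *ᵥ w = A₀ *ᵥ c := by
      rw [← huw, Matrix.mulVec_add, hA₀u, zero_add]
    rw [h2] at h1
    calc ‖w‖ ≤ m * ‖A₀ *ᵥ c‖ := h1
      _ ≤ m * (H + (a₁ + n * CA') * |θ| * ‖c‖) := mul_le_mul_of_nonneg_left hA₀cb hm.le
      _ = m * H + m * (a₁ + n * CA') * |θ| * ‖c‖ := by ring
  -- the G-equation
  have h1 : (θ:ℂ) • (G (A₁ *ᵥ c)) + G (E *ᵥ c) = (θ:ℂ) • (G h₁) + G e := by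
    have h0 : G (A θ *ᵥ c) = G (h θ) := congrArg G hc
    rw [hAsplit, hhsplit] at h0
    simpa [map_add, _root_.map_smul, hGA₀, hGh₀] using h0
  have h2 : (θ:ℂ) • (G (A₁ *ᵥ c) - G h₁) = G e - G (E *ᵥ c) := by
    rw [smul_sub]
    exact sub_eq_sub_iff_add_eq_add.mpr (h1.trans (add_comm _ _))
  have hGA₁cb : ‖G (A₁ *ᵥ c) - G h₁‖ ≤ g * Ch' * |θ| + g * (n * CA') * |θ| * ‖c‖ := by
    have h3 : |θ| * ‖G (A₁ *ᵥ c) - G h₁‖ = ‖G e - G (E *ᵥ c)‖ := by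
      rw [← h2, norm_smul, Complex.norm_real, Real.norm_eq_abs]
    have h4 : ‖G e - G (E *ᵥ c)‖ ≤ g * (Ch' * θ ^ 2) + g * ((n * (CA' * θ ^ 2)) * ‖c‖) := by
      have h5 : ‖G e‖ ≤ g * ‖e‖ := hgle e
      have h6 : ‖G (E *ᵥ c)‖ ≤ g * ‖E *ᵥ c‖ := hgle _
      have h7 : g * ‖e‖ ≤ g * (Ch' * θ ^ 2) := mul_le_mul_of_nonneg_left heb hg
      have h8 : g * ‖E *ᵥ c‖ ≤ g * ((n * (CA' * θ ^ 2)) * ‖c‖) :=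
        mul_le_mul_of_nonneg_left (hEb c) hg
      linarith [norm_sub_le (G e) (G (E *ᵥ c))]
    have h9 : g * (Ch' * θ ^ 2) + g * ((n * (CA' * θ ^ 2)) * ‖c‖)
        = |θ| * (g * Ch' * |θ| + g * (n * CA') * |θ| * ‖c‖) := by
      rw [← sq_abs θ]; ring
    have h10 : |θ| * ‖G (A₁ *ᵥ c) - G h₁‖
        ≤ |θ| * (g * Ch' * |θ| + g * (n * CA') * |θ| * ‖c‖) := by
      rw [h3]; rw [← h9] at *; linarith
    exact le_of_mul_le_mul_left h10 ht0
  have hA₁split : A₁ *ᵥ c = A₁ *ᵥ u + A₁ *ᵥ w := by rw [← huw, Matrix.mulVec_add]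
  have hub : ‖u‖ ≤ μ * ((g * Ch' * |θ| + g * (n * CA') * |θ| * ‖c‖) + g * ‖h₁‖
      + g * (a₁ * (m * H + m * (a₁ + n * CA') * |θ| * ‖c‖))) := by
    have hu1 : ‖u‖ ≤ μ * ‖G (A₁ *ᵥ u)‖ := hμle ⟨u, hu⟩
    have hu2 : G (A₁ *ᵥ u) = (G (A₁ *ᵥ c) - G h₁) + G h₁ - G (A₁ *ᵥ w) := by
      rw [hA₁split, map_add]; abel
    have hu3 : ‖G (A₁ *ᵥ u)‖ ≤ ‖G (A₁ *ᵥ c) - G h₁‖ + ‖G h₁‖ + ‖G (A₁ *ᵥ w)‖ := by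
      rw [hu2]
      exact (norm_sub_le _ _).trans (add_le_add_left (norm_add_le _ _) _)
    have hu4 : ‖G h₁‖ ≤ g * ‖h₁‖ := hgle h₁
    have hu5 : ‖G (A₁ *ᵥ w)‖ ≤ g * (a₁ * ‖w‖) := by
      refine (hgle _).trans (mul_le_mul_of_nonneg_left ?_ hg)
      exact ha₁le w
    have hu6 : g * (a₁ * ‖w‖) ≤ g * (a₁ * (m * H + m * (a₁ + n * CA') * |θ| * ‖c‖)) :=
      mul_le_mul_of_nonneg_left (mul_le_mul_of_nonneg_left hwb ha₁) hg
    calc ‖u‖ ≤ μ * ‖G (A₁ *ᵥ u)‖ := hu1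
      _ ≤ μ * ((g * Ch' * |θ| + g * (n * CA') * |θ| * ‖c‖) + g * ‖h₁‖
          + g * (a₁ * (m * H + m * (a₁ + n * CA') * |θ| * ‖c‖))) := by
        refine mul_le_mul_of_nonneg_left ?_ hμ0.le
        linarith [hGA₁cb]
  have hNc : ‖c‖ ≤ ‖u‖ + ‖w‖ := by rw [← huw]; exact norm_add_le _ _
  have hmain : ‖c‖ ≤ D₁ + D₂ * (|θ| * ‖c‖) := by
    rw [hD₁, hD₂]
    have h7 : μ * ((g * Ch') * |θ|) ≤ μ * ((g * Ch') * 1) :=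
      mul_le_mul_of_nonneg_left
        (mul_le_mul_of_nonneg_left ht1 (mul_nonneg hg hCh'0)) hμ0.le
    linarith only [hNc, hub, hwb, h7]
  have hDt : D₂ * |θ| ≤ 1 / 2 := by
    have h2D : (0:ℝ) < 2 * (D₂ + 1) := by linarith
    calc D₂ * |θ| ≤ D₂ * (1 / (2 * (D₂ + 1))) := mul_le_mul_of_nonneg_left ht2 hD₂0
      _ ≤ 1 / 2 := by rw [mul_one_div, div_le_iff₀ h2D]; linarith
  have hfin : ‖c‖ ≤ 2 * D₁ := by
    have h8 : 0 ≤ (1 / 2 - D₂ * |θ|) * ‖c‖ :=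
      mul_nonneg (sub_nonneg.mpr hDt) (norm_nonneg c)
    linarith only [hmain, h8, norm_nonneg c]
  calc ‖c i‖ = ‖c i‖ := rfl
    _ ≤ ‖c‖ := norm_le_pi_norm c i
    _ ≤ 2 * D₁ := hfin
    _ ≤ 2 * D₁ + 1 := by linarith
end

section
/- Let M_+ be the N×N all-ones matrix and A₀ = [[-(1+p)M_+, -pM_+],[-pI, (1-p)I]] for an integer p ≥ 1. Then u = (u₁, u₂) ∈ ℂ^N × ℂ^N belongs to Null(A₀) if and only if u₁ = (1-p)w and u₂ = pw for some w ∈ Null(M_+). In particular dim Null(A₀) = N - 1. -/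
/-- For `M₊` the all-ones matrix and `A₀ = [[-(1+p)M₊, -pM₊], [-pI, (1-p)I]]` with `p ≥ 1`,
the kernel of `A₀` consists exactly of vectors `((1-p) w, p w)` with `w ∈ Null(M₊)`,
and has dimension `N - 1`. -/
theorem stmt_11 (N : ℕ) (hN : 1 ≤ N) (p : ℕ) (hp : 1 ≤ p)
    (M : Matrix (Fin N) (Fin N) ℂ) (hM : M = Matrix.of fun _ _ => (1 : ℂ))
    (A₀ : Matrix (Fin N ⊕ Fin N) (Fin N ⊕ Fin N) ℂ)
    (hA₀ : A₀ = Matrix.fromBlocks (-(1 + (p : ℂ)) • M) (-(p : ℂ) • M)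
      (-(p : ℂ) • (1 : Matrix (Fin N) (Fin N) ℂ))
      ((1 - (p : ℂ)) • (1 : Matrix (Fin N) (Fin N) ℂ))) :
    (∀ u : Fin N ⊕ Fin N → ℂ,
        A₀.mulVec u = 0 ↔
          ∃ w : Fin N → ℂ, M.mulVec w = 0 ∧
            (∀ i, u (Sum.inl i) = (1 - (p : ℂ)) * w i) ∧
            (∀ i, u (Sum.inr i) = (p : ℂ) * w i)) ∧
      Module.finrank ℂ (LinearMap.ker A₀.mulVecLin) = N - 1 := by
  have hp0 : (p : ℂ) ≠ 0 := Nat.cast_ne_zero.mpr (by omega)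
  have i0 : Fin N := ⟨0, hN⟩
  have hrow1 : ∀ (u : Fin N ⊕ Fin N → ℂ) (i : Fin N),
      A₀.mulVec u (Sum.inl i)
        = (-(1 + (p:ℂ))) * ∑ k, u (Sum.inl k) + (-(p:ℂ)) * ∑ k, u (Sum.inr k) := by
    intro u i
    subst hM hA₀
    simp [Matrix.mulVec, dotProduct, Fintype.sum_sum_type, Matrix.fromBlocks,
      Finset.mul_sum]
  have hrow2 : ∀ (u : Fin N ⊕ Fin N → ℂ) (i : Fin N),
      A₀.mulVec u (Sum.inr i) = (-(p:ℂ)) * u (Sum.inl i) + (1 - (p:ℂ)) * u (Sum.inr i) := by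
    intro u i
    subst hM hA₀
    simp [Matrix.mulVec, dotProduct, Fintype.sum_sum_type, Matrix.fromBlocks,
      Matrix.one_apply, Finset.mul_sum]
  have hMker : ∀ w : Fin N → ℂ, M.mulVec w = 0 ↔ ∑ k, w k = 0 := by
    intro w
    subst hM
    constructor
    · intro h
      have := congrFun h i0
      simpa [Matrix.mulVec, dotProduct] using this
    · intro h
      funext i
      simpa [Matrix.mulVec, dotProduct] using h
  have key : ∀ u : Fin N ⊕ Fin N → ℂ,
      A₀.mulVec u = 0 ↔
        ∃ w : Fin N → ℂ, M.mulVec w = 0 ∧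
          (∀ i, u (Sum.inl i) = (1 - (p : ℂ)) * w i) ∧
          (∀ i, u (Sum.inr i) = (p : ℂ) * w i) := by
    intro u
    constructor
    · intro h
      have hu1 : ∀ i, u (Sum.inl i) = (1 - (p:ℂ)) * (u (Sum.inr i) / (p:ℂ)) := by
        intro i
        have hi : (-(p:ℂ)) * u (Sum.inl i) + (1 - (p:ℂ)) * u (Sum.inr i) = 0 := by
          rw [← hrow2 u i, h]; rfl
        field_simp
        linear_combination -hi
      refine ⟨fun i => u (Sum.inr i) / (p:ℂ), ?_, hu1, ?_⟩
      · rw [hMker]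
        have h1 : (-(1 + (p:ℂ))) * ∑ k, u (Sum.inl k) + (-(p:ℂ)) * ∑ k, u (Sum.inr k) = 0 := by
          rw [← hrow1 u i0, h]; rfl
        have hS : ∑ k, u (Sum.inl k) = (1 - (p:ℂ)) / (p:ℂ) * ∑ k, u (Sum.inr k) := by
          rw [Finset.mul_sum]
          refine Finset.sum_congr rfl fun k _ => ?_
          rw [hu1 k]; ring
        rw [hS] at h1
        rw [← Finset.sum_div]
        field_simp at h1 ⊢
        linear_combination -h1
      · intro i
        field_simp
    · rintro ⟨w, hw, h1, h2⟩
      have hS : ∑ k, w k = 0 := (hMker w).mp hw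
      funext j
      cases j with
      | inl i =>
        rw [hrow1]
        simp only [h1, h2, ← Finset.mul_sum, hS, mul_zero, add_zero, Pi.zero_apply]
      | inr i =>
        rw [hrow2, h1, h2]
        simp only [Pi.zero_apply]
        ring
  refine ⟨key, ?_⟩
  -- the sum functional
  let f : (Fin N → ℂ) →ₗ[ℂ] ℂ :=
    { toFun := fun w => ∑ k, w k
      map_add' := fun x y => by simp [Finset.sum_add_distrib]
      map_smul' := fun c x => by simp [Finset.mul_sum] }
  have hfsurj : Function.Surjective f := by
    intro c
    refine ⟨Pi.single i0 c, ?_⟩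
    simp [f]
  have hkerf : Module.finrank ℂ (LinearMap.ker f) = N - 1 := by
    have h1 := LinearMap.finrank_range_add_finrank_ker f
    rw [LinearMap.range_eq_top.mpr hfsurj] at h1
    have h2 : Module.finrank ℂ (⊤ : Submodule ℂ ℂ) = 1 := by simp
    rw [h2, Module.finrank_pi, Fintype.card_fin] at h1
    omega
  -- linear equivalence ker A₀ ≃ ker f
  let e : LinearMap.ker f →ₗ[ℂ] LinearMap.ker A₀.mulVecLin :=
    { toFun := fun w => ⟨Sum.elim (fun i => (1 - (p:ℂ)) * w.1 i) (fun i => (p:ℂ) * w.1 i), by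
        rw [LinearMap.mem_ker, Matrix.mulVecLin_apply, key]
        exact ⟨w.1, (hMker w.1).mpr w.2, fun i => rfl, fun i => rfl⟩⟩
      map_add' := fun x y => by
        ext j
        cases j <;> simp <;> ring
      map_smul' := fun c x => by
        ext j
        cases j <;> simp <;> ring }
  have hbij : Function.Bijective e := by
    constructor
    · intro x y hxy
      ext i
      have h' : (e x : Fin N ⊕ Fin N → ℂ) = (e y : Fin N ⊕ Fin N → ℂ) := congrArg Subtype.val hxy
      have := congrFun h' (Sum.inr i)
      simp [e] at this
      rcases this with h | h
      · exact h
      · omega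
    · rintro ⟨u, hu⟩
      rw [LinearMap.mem_ker, Matrix.mulVecLin_apply, key] at hu
      obtain ⟨w, hw, h1, h2⟩ := hu
      refine ⟨⟨w, (hMker w).mp hw⟩, ?_⟩
      ext j
      cases j with
      | inl i => simp [e, (h1 i).symm]
      | inr i => simp [e, (h2 i).symm]
  rw [← hkerf]
  exact (LinearEquiv.ofBijective e hbij).symm.finrank_eq
end
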